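/- The function S(x) = (1 − h((1+x)/2))/x is monotone increasing on the interval (0,1), and the function F(x) = (1 − h(x) − x)/x is convex on the interval (0,1), where h is the binary entropy function. -/

import Mathlib

/-- The binary entropy function `h(p) = −p·log₂ p − (1−p)·log₂(1−p)`
(with the convention `log₂ 0 = 0`, so `h 0 = h 1 = 0`). -/
noncomputable def binEnt (p : ℝ) : ℝ :=
  -(p * Real.logb 2 p) - (1 - p) * Real.logb 2 (1 - p)

lemma binEnt_eq (p : ℝ) :
    binEnt p = (-(p * Real.log p) - (1 - p) * Real.log (1 - p)) / Real.log 2 := by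
  unfold binEnt Real.logb; ring

lemma binEnt_hasDerivAt {p : ℝ} (h0 : 0 < p) (h1 : p < 1) :
    HasDerivAt binEnt ((Real.log (1 - p) - Real.log p) / Real.log 2) p := by
  have h1' : (0:ℝ) < 1 - p := by linarith
  have hA : HasDerivAt (fun x : ℝ => x * Real.log x) (Real.log p + 1) p :=
    Real.hasDerivAt_mul_log h0.ne'
  have hsub : HasDerivAt (fun x : ℝ => 1 - x) (-1 : ℝ) p := by
    exact (hasDerivAt_id' p).const_sub 1
  have hB : HasDerivAt (fun x : ℝ => (1 - x) * Real.log (1 - x))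
      ((Real.log (1 - p) + 1) * (-1)) p := by
    have := (Real.hasDerivAt_mul_log h1'.ne').comp p hsub
    exact this
  have h : HasDerivAt
      (fun x : ℝ => (-(x * Real.log x) - (1 - x) * Real.log (1 - x)) / Real.log 2)
      ((-(Real.log p + 1) - (Real.log (1 - p) + 1) * (-1)) / Real.log 2) p :=
    (hA.neg.sub hB).div_const _
  have heq : (fun x : ℝ => (-(x * Real.log x) - (1 - x) * Real.log (1 - x)) / Real.log 2)
      = binEnt := by
    funext x; rw [binEnt_eq]
  rw [heq] at h
  convert h using 1
  ring

lemma S_hasDerivAt {x : ℝ} (hx : x ∈ Set.Ioo (0:ℝ) 1) :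
    HasDerivAt (fun x : ℝ => (1 - binEnt ((1 + x) / 2)) / x)
      (((0 - (Real.log (1 - (1 + x) / 2) - Real.log ((1 + x) / 2)) / Real.log 2 * (1/2)) * x
        - (1 - binEnt ((1 + x) / 2)) * 1) / x ^ 2) x := by
  obtain ⟨hx0, hx1⟩ := hx
  have hp0 : (0:ℝ) < (1 + x) / 2 := by linarith
  have hp1 : (1 + x) / 2 < 1 := by linarith
  have hhalf : HasDerivAt (fun x : ℝ => (1 + x) / 2) (1/2 : ℝ) x := by
    simpa using (((hasDerivAt_const x (1:ℝ)).add (hasDerivAt_id x)).div_const 2)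
  have hin : HasDerivAt (fun x : ℝ => binEnt ((1 + x) / 2))
      ((Real.log (1 - (1 + x) / 2) - Real.log ((1 + x) / 2)) / Real.log 2 * (1/2)) x := by
    have := (binEnt_hasDerivAt hp0 hp1).comp x hhalf
    exact this
  exact ((hasDerivAt_const x (1:ℝ)).sub hin).div (hasDerivAt_id x) hx0.ne'

lemma S_deriv_nonneg {x : ℝ} (hx : x ∈ Set.Ioo (0:ℝ) 1) :
    0 ≤ ((0 - (Real.log (1 - (1 + x) / 2) - Real.log ((1 + x) / 2)) / Real.log 2 * (1/2)) * x
        - (1 - binEnt ((1 + x) / 2)) * 1) / x ^ 2 := by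
  obtain ⟨hx0, hx1⟩ := hx
  have h1x : (0:ℝ) < 1 + x := by linarith
  have h1x' : (0:ℝ) < 1 - x := by linarith
  have hL : (0:ℝ) < Real.log 2 := Real.log_pos (by norm_num)
  have e1 : (1 : ℝ) - (1 + x) / 2 = (1 - x) / 2 := by ring
  have e2 : Real.log ((1 - x) / 2) = Real.log (1 - x) - Real.log 2 :=
    Real.log_div h1x'.ne' (by norm_num)
  have e3 : Real.log ((1 + x) / 2) = Real.log (1 + x) - Real.log 2 :=
    Real.log_div h1x.ne' (by norm_num)
  have hnum : ((0 - (Real.log (1 - (1 + x) / 2) - Real.log ((1 + x) / 2)) / Real.log 2 * (1/2)) * x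
        - (1 - binEnt ((1 + x) / 2)) * 1)
      = -(Real.log (1 + x) + Real.log (1 - x)) / (2 * Real.log 2) := by
    rw [binEnt_eq, e1, e2, e3]
    field_simp
    ring
  rw [hnum]
  have hlog : Real.log (1 + x) + Real.log (1 - x) ≤ 0 := by
    rw [← Real.log_mul h1x.ne' h1x'.ne']
    apply Real.log_nonpos (by nlinarith) (by nlinarith)
  have hx2 : (0:ℝ) < x ^ 2 := by positivity
  apply div_nonneg _ hx2.le
  apply div_nonneg (by linarith) (by positivity)

/-- The derivative of `F(x) = (1 - binEnt x - x)/x`. -/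
noncomputable def Fd (x : ℝ) : ℝ := (-(Real.log (1 - x) / Real.log 2) - 1) / x ^ 2

/-- The second derivative of `F`. -/
noncomputable def Fd2 (x : ℝ) : ℝ :=
  ((1 / (1 - x)) / Real.log 2 * x ^ 2
    - (-(Real.log (1 - x) / Real.log 2) - 1) * (2 * x)) / (x ^ 2) ^ 2

lemma F_hasDerivAt {x : ℝ} (hx : x ∈ Set.Ioo (0:ℝ) 1) :
    HasDerivAt (fun x : ℝ => (1 - binEnt x - x) / x) (Fd x) x := by
  obtain ⟨hx0, hx1⟩ := hx
  have hL : (0:ℝ) < Real.log 2 := Real.log_pos (by norm_num)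
  have hnum : HasDerivAt (fun x : ℝ => 1 - binEnt x - x)
      ((Real.log (1 - x) - Real.log x) / Real.log 2 * (-1) - 1) x := by
    have h1 := ((hasDerivAt_const x (1:ℝ)).sub (binEnt_hasDerivAt hx0 hx1)).sub (hasDerivAt_id x)
    exact h1.congr_deriv (by ring)
  have h := hnum.div (hasDerivAt_id x) hx0.ne'
  refine h.congr_deriv ?_
  unfold Fd
  rw [binEnt_eq]
  simp only [id]
  have h1x : (0:ℝ) < 1 - x := by linarith
  field_simp
  ring

lemma Fd_hasDerivAt {x : ℝ} (hx : x ∈ Set.Ioo (0:ℝ) 1) :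
    HasDerivAt Fd (Fd2 x) x := by
  obtain ⟨hx0, hx1⟩ := hx
  have h1x : (0:ℝ) < 1 - x := by linarith
  have hsub : HasDerivAt (fun x : ℝ => 1 - x) (-1 : ℝ) x := by
    exact (hasDerivAt_id' x).const_sub 1
  have hlog : HasDerivAt (fun x : ℝ => Real.log (1 - x)) ((1 - x)⁻¹ * (-1)) x := by
    have := (Real.hasDerivAt_log h1x.ne').comp x hsub
    exact this
  have hn : HasDerivAt (fun x : ℝ => -(Real.log (1 - x) / Real.log 2) - 1)
      ((1 / (1 - x)) / Real.log 2) x := by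
    have := ((hlog.div_const (Real.log 2)).neg).sub (hasDerivAt_const x (1:ℝ))
    refine this.congr_deriv ?_
    field_simp
    ring
  have hsq : HasDerivAt (fun x : ℝ => x ^ 2) (2 * x) x := by
    simpa using (hasDerivAt_pow 2 x)
  exact hn.div hsq (by positivity)

lemma Fd2_nonneg {x : ℝ} (hx : x ∈ Set.Ioo (0:ℝ) 1) : 0 ≤ Fd2 x := by
  obtain ⟨hx0, hx1⟩ := hx
  have h1x : (0:ℝ) < 1 - x := by linarith
  have hL : (0:ℝ) < Real.log 2 := Real.log_pos (by norm_num)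
  have hkey : 1 - 1 / (2 * (1 - x)) ≤ Real.log (2 * (1 - x)) := by
    have h := Real.log_le_sub_one_of_pos (x := (2 * (1 - x))⁻¹) (by positivity)
    rw [Real.log_inv] at h
    have : (2 * (1 - x))⁻¹ = 1 / (2 * (1 - x)) := by ring
    linarith [h, this ▸ h]
  have hlogmul : Real.log (2 * (1 - x)) = Real.log 2 + Real.log (1 - x) :=
    Real.log_mul (by norm_num) h1x.ne'
  have hscal : 0 ≤ x / (1 - x) + 2 * Real.log 2 + 2 * Real.log (1 - x) := by
    have h2 : 1 - 1 / (2 * (1 - x)) ≤ Real.log 2 + Real.log (1 - x) := by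
      rw [← hlogmul]; exact hkey
    have hx' : x / (1 - x) = 1 / (1 - x) - 1 := by field_simp; ring
    have h3 : 1 / (2 * (1 - x)) = (1 / (1 - x)) / 2 := by
      field_simp
    nlinarith [h2, hx', h3, one_div_pos.mpr h1x]
  unfold Fd2
  have hnum : (1 / (1 - x)) / Real.log 2 * x ^ 2
        - (-(Real.log (1 - x) / Real.log 2) - 1) * (2 * x)
      = x * (x / (1 - x) + 2 * Real.log 2 + 2 * Real.log (1 - x)) / Real.log 2 := by
    field_simp
    ring
  rw [hnum]
  have h4 : (0:ℝ) < (x ^ 2) ^ 2 := by positivity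
  apply div_nonneg _ h4.le
  apply div_nonneg _ hL.le
  exact mul_nonneg hx0.le hscal

/-- `S(x) = (1 − h((1+x)/2))/x` is monotone increasing on `(0,1)`, and
`F(x) = (1 − h(x) − x)/x` is convex on `(0,1)`. -/
theorem S_monotone_and_F_convex :
    MonotoneOn (fun x : ℝ => (1 - binEnt ((1 + x) / 2)) / x) (Set.Ioo 0 1) ∧
    ConvexOn ℝ (Set.Ioo (0 : ℝ) 1) (fun x : ℝ => (1 - binEnt x - x) / x) := by
  constructor
  · apply monotoneOn_of_deriv_nonneg (convex_Ioo 0 1)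
    · intro x hx
      exact ((S_hasDerivAt hx).differentiableAt.continuousAt).continuousWithinAt
    · intro x hx
      rw [interior_Ioo] at hx
      exact (S_hasDerivAt hx).differentiableAt.differentiableWithinAt
    · intro x hx
      rw [interior_Ioo] at hx
      rw [(S_hasDerivAt hx).deriv]
      exact S_deriv_nonneg hx
  · apply convexOn_of_hasDerivWithinAt2_nonneg (convex_Ioo 0 1) (f' := Fd) (f'' := Fd2)
    · intro x hx
      exact ((F_hasDerivAt hx).differentiableAt.continuousAt).continuousWithinAt
    · intro x hx
      rw [interior_Ioo] at hx ⊢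
      exact (F_hasDerivAt hx).hasDerivWithinAt
    · intro x hx
      rw [interior_Ioo] at hx ⊢
      exact (Fd_hasDerivAt hx).hasDerivWithinAt
    · intro x hx
      rw [interior_Ioo] at hx
      exact Fd2_nonneg hx
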